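/- arXiv:2412.09235 — 2 statements merged into one kernel-verified Lean document; each statement's English description precedes it below -/
import Mathlib

section
/- Let X be a standard Borel space with a probability measure ρ, let ν be a probability measure on ℝ^d, let ε > 0, and let c : X × ℝ^d → ℝ be measurable with c(x,·) continuously differentiable for every x. Suppose there exist measurable functions φ : X → ℝ and ψ : ℝ^d → ℝ such that: (a) for every y ∈ ℝ^d the measure π(dx|y) := exp(−(c(x,y)+φ(x)+ψ(y))/ε) ρ(dx) is a probability measure on X; (b) ψ is differentiable and ∇ψ(y) = −∫_X ∇₂c(x,y) π(dx|y) for every y ∈ ℝ^d; (c) there exists Λ > 0 such that for every x in the support of ρ the map y ↦ c(x,y) + ψ(y) is Λ-semiconcave. Then for all y, z ∈ ℝ^d: KL(π(·|y) | π(·|z)) ≤ (Λ/(2ε))·|y−z|². -/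
open MeasureTheory Real ENNReal Filter
open scoped RealInnerProductSpace

noncomputable section

open Classical in
/-- The Kullback--Leibler divergence `KL(μ|ν)`: `∫ log (dμ/dν) dμ` if `μ ≪ ν`, `+∞` otherwise. -/
def KL {α : Type*} [MeasurableSpace α] (μ ν : Measure α) : ℝ≥0∞ :=
  if μ ≪ ν then ENNReal.ofReal (∫ x, Real.log (μ.rnDeriv ν x).toReal ∂μ) else ⊤

/-- The (topological) support of a measure. -/
def msupport {α : Type*} [TopologicalSpace α] [MeasurableSpace α] (μ : Measure α) : Set α :=
  {x | ∀ U : Set α, IsOpen U → x ∈ U → 0 < μ U}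

/-- The generalized transport cost `W_ω(μ, ν)`: the infimum of `∫ ω(z, y) dπ(z, y)` over
couplings `π` of `(μ, ν)`. -/
def Wcost {α : Type*} [MeasurableSpace α] (ω : α → α → ℝ) (μ ν : Measure α) : ℝ≥0∞ :=
  ⨅ (P : Measure (α × α)) (_ : P.map Prod.fst = μ ∧ P.map Prod.snd = ν),
    ∫⁻ p, ENNReal.ofReal (ω p.1 p.2) ∂P

/-- The squared Wasserstein distance of order two. -/
def W2sq {α : Type*} [MeasurableSpace α] [NormedAddCommGroup α] (μ ν : Measure α) : ℝ≥0∞ :=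
  Wcost (fun y z => ‖y - z‖ ^ 2) μ ν

/-- Talagrand's transport inequality `TI(τ)` for `ν`. -/
def TI {α : Type*} [MeasurableSpace α] [NormedAddCommGroup α] (τ : ℝ) (ν : Measure α) : Prop :=
  ∀ μ : Measure α, IsProbabilityMeasure μ → W2sq μ ν ≤ ENNReal.ofReal (2 * τ) * KL μ ν

/-- The generalized transport inequality `TI_ω(τ)` for `ν`. -/
def TIcost {α : Type*} [MeasurableSpace α] (ω : α → α → ℝ) (τ : ℝ) (ν : Measure α) : Prop :=
  ∀ μ : Measure α, IsProbabilityMeasure μ → Wcost ω μ ν ≤ ENNReal.ofReal (2 * τ) * KL μ ν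

/-- `Λ`-semiconcavity of a (differentiable) function on an inner product space. -/
def Semiconcave {E : Type*} [NormedAddCommGroup E] [InnerProductSpace ℝ E] [CompleteSpace E]
    (Λ : ℝ) (f : E → ℝ) : Prop :=
  ∀ y z : E, f z - f y ≤ ⟪gradient f y, z - y⟫ + Λ / 2 * ‖z - y‖ ^ 2

/-- `(Λ, ω)`-semiconcavity of a (differentiable) function on an inner product space. -/
def SemiconcaveW {E : Type*} [NormedAddCommGroup E] [InnerProductSpace ℝ E] [CompleteSpace E]
    (Λ : ℝ) (ω : E → E → ℝ) (f : E → ℝ) : Prop :=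
  ∀ y z : E, f z - f y ≤ ⟪gradient f y, z - y⟫ + Λ / 2 * ω z y

/-- The plan with density `exp(-(c(x,y) + f(x) + g(y))/ε)` with respect to `ρ ⊗ ν`. -/
def plan {X Y : Type*} [MeasurableSpace X] [MeasurableSpace Y]
    (ρ : Measure X) (ν : Measure Y) [SFinite ν] (ε : ℝ) (c : X → Y → ℝ)
    (f : X → ℝ) (g : Y → ℝ) : Measure (X × Y) :=
  (ρ.prod ν).withDensity fun p => ENNReal.ofReal (Real.exp (-(c p.1 p.2 + f p.1 + g p.2) / ε))

/-- The conditional plan given the second coordinate `y`: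
`π(dx|y) = exp(-(c(x,y) + f(x) + g(y))/ε) ρ(dx)`. -/
def condSnd {X Y : Type*} [MeasurableSpace X]
    (ρ : Measure X) (ε : ℝ) (c : X → Y → ℝ) (f : X → ℝ) (g : Y → ℝ) (y : Y) : Measure X :=
  ρ.withDensity fun x => ENNReal.ofReal (Real.exp (-(c x y + f x + g y) / ε))

/-- The conditional plan given the first coordinate `x`:
`π(dy|x) = exp(-(c(x,y) + f(x) + g(y))/ε) ν(dy)`. -/
def condFst {X Y : Type*} [MeasurableSpace Y]
    (ν : Measure Y) (ε : ℝ) (c : X → Y → ℝ) (f : X → ℝ) (g : Y → ℝ) (x : X) : Measure Y :=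
  ν.withDensity fun y => ENNReal.ofReal (Real.exp (-(c x y + f x + g y) / ε))

/-- The logarithmic Sobolev inequality `LSI(C)` for `ρ`. -/
def LSI {F : Type*} [NormedAddCommGroup F] [InnerProductSpace ℝ F] [CompleteSpace F]
    [MeasurableSpace F] (C : ℝ) (ρ : Measure F) : Prop :=
  ∀ g : F → ℝ, Differentiable ℝ g → (∀ x, 0 < g x) →
    IsProbabilityMeasure (ρ.withDensity fun x => ENNReal.ofReal (g x)) →
    KL (ρ.withDensity fun x => ENNReal.ofReal (g x)) ρ ≤
      ENNReal.ofReal (C / 2 * ∫ x, ‖gradient (fun x' => Real.log (g x')) x‖ ^ 2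
        ∂(ρ.withDensity fun x => ENNReal.ofReal (g x)))

section Auxiliary

open scoped Topology

variable {E : Type*} [NormedAddCommGroup E] [InnerProductSpace ℝ E] [CompleteSpace E]

lemma aux_inner_gradient (f : E → ℝ) (x v : E) : ⟪gradient f x, v⟫ = fderiv ℝ f x v := by
  simp [gradient, InnerProductSpace.toDual_symm_apply]

lemma aux_gradient_add {f g : E → ℝ} {x : E} (hf : DifferentiableAt ℝ f x)
    (hg : DifferentiableAt ℝ g x) :
    gradient (fun y => f y + g y) x = gradient f x + gradient g x := by
  simp only [gradient, fderiv_fun_add hf hg, map_add]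

lemma aux_ae_mem_msupport {α : Type*} [TopologicalSpace α] [SecondCountableTopology α]
    [MeasurableSpace α] (μ : Measure α) : ∀ᵐ x ∂μ, x ∈ msupport μ := by
  have hsub : (msupport μ)ᶜ ⊆ ⋃ U ∈ {U ∈ TopologicalSpace.countableBasis α | μ U = 0}, U := by
    intro x hx
    simp only [Set.mem_compl_iff, msupport, Set.mem_setOf_eq] at hx
    push_neg at hx
    obtain ⟨U, hUopen, hxU, hU0⟩ := hx
    obtain ⟨V, hVB, hxV, hVU⟩ :=
      (TopologicalSpace.isBasis_countableBasis α).exists_subset_of_mem_open hxU hUopen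
    exact Set.mem_biUnion ⟨hVB, measure_mono_null hVU (le_antisymm hU0 zero_le)⟩ hxV
  have h0 : μ (⋃ U ∈ {U ∈ TopologicalSpace.countableBasis α | μ U = 0}, U) = 0 :=
    (measure_biUnion_null_iff ((TopologicalSpace.countable_countableBasis α).mono
      (Set.sep_subset _ _))).mpr fun U hU => hU.2
  rw [ae_iff]
  exact measure_mono_null hsub h0

lemma aux_dirderiv_measurable {X : Type*} [MeasurableSpace X] {d : ℕ}
    {c : X → EuclideanSpace ℝ (Fin d) → ℝ} (hc_meas : Measurable (Function.uncurry c))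
    (hc_smooth : ∀ x, ContDiff ℝ 1 (c x)) (y v : EuclideanSpace ℝ (Fin d)) :
    Measurable fun x => fderiv ℝ (c x) y v := by
  have hcw : ∀ w : EuclideanSpace ℝ (Fin d), Measurable fun x => c x w := fun w =>
    hc_meas.comp (measurable_id.prodMk measurable_const)
  apply measurable_of_tendsto_metrizable
    (f := fun (n : ℕ) x => slope (fun t : ℝ => c x (y + t • v)) 0 (((n : ℝ) + 1)⁻¹))
  · intro n
    simp only [slope_def_field]
    exact ((hcw _).sub (hcw _)).div_const _
  · rw [tendsto_pi_nhds]
    intro x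
    have hd : HasFDerivAt (c x) (fderiv ℝ (c x) y) y :=
      ((hc_smooth x).differentiable one_ne_zero y).hasFDerivAt
    have hline : HasDerivAt (fun t : ℝ => y + t • v) v 0 := by
      simpa using ((hasDerivAt_id (0 : ℝ)).smul_const v).const_add y
    have hd' : HasFDerivAt (c x) (fderiv ℝ (c x) y) (y + (0 : ℝ) • v) := by
      simpa using hd
    have hcomp : HasDerivAt (fun t : ℝ => c x (y + t • v)) (fderiv ℝ (c x) y v) 0 := by
      exact hd'.comp_hasDerivAt (0 : ℝ) hline
    have hslope := hasDerivAt_iff_tendsto_slope.mp hcomp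
    have h1 : Tendsto (fun n : ℕ => ((n : ℝ) + 1)⁻¹) atTop (𝓝 (0 : ℝ)) := by
      simpa [one_div] using tendsto_one_div_add_atTop_nhds_zero_nat (𝕜 := ℝ)
    have htn : Tendsto (fun n : ℕ => ((n : ℝ) + 1)⁻¹) atTop (𝓝[≠] (0 : ℝ)) :=
      tendsto_nhdsWithin_of_tendsto_nhds_of_eventually_within _ h1
        (Filter.Eventually.of_forall fun n => by
          simp only [Set.mem_compl_iff, Set.mem_singleton_iff]
          exact (by positivity : (0 : ℝ) < ((n : ℝ) + 1)⁻¹).ne')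
    exact hslope.comp htn

lemma aux_grad_measurable {X : Type*} [MeasurableSpace X] {d : ℕ}
    {c : X → EuclideanSpace ℝ (Fin d) → ℝ} (hc_meas : Measurable (Function.uncurry c))
    (hc_smooth : ∀ x, ContDiff ℝ 1 (c x)) (y : EuclideanSpace ℝ (Fin d)) :
    Measurable fun x => gradient (c x) y := by
  have hrepr : ∀ x, gradient (c x) y =
      ∑ i, fderiv ℝ (c x) y (EuclideanSpace.basisFun (Fin d) ℝ i) •
        (EuclideanSpace.basisFun (Fin d) ℝ i : EuclideanSpace ℝ (Fin d)) := by
    intro x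
    conv_lhs => rw [← (EuclideanSpace.basisFun (Fin d) ℝ).sum_repr' (gradient (c x) y)]
    exact Finset.sum_congr rfl fun i _ => by rw [real_inner_comm, aux_inner_gradient]
  simp_rw [hrepr]
  exact Finset.measurable_sum _ fun i _ =>
    (aux_dirderiv_measurable hc_meas hc_smooth y _).smul_const _

lemma aux_abs_le_exp (t : ℝ) : |t| ≤ Real.exp t + Real.exp (-t) := by
  rcases abs_cases t with ⟨h, _⟩ | ⟨h, _⟩ <;> rw [h] <;>
    nlinarith [Real.add_one_le_exp t, Real.add_one_le_exp (-t), Real.exp_pos t, Real.exp_pos (-t)]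

end Auxiliary

/-- **KL bound between conditional plans** (Lemma 2.1). -/
theorem kl_between_conditionals
    {X : Type*} [MeasurableSpace X] [TopologicalSpace X] [PolishSpace X] [BorelSpace X]
    {d : ℕ} (ρ : Measure X) [IsProbabilityMeasure ρ]
    (ε : ℝ) (hε : 0 < ε)
    (c : X → EuclideanSpace ℝ (Fin d) → ℝ)
    (hc_meas : Measurable (Function.uncurry c))
    (hc_smooth : ∀ x, ContDiff ℝ 1 (c x))
    (φ : X → ℝ) (ψ : EuclideanSpace ℝ (Fin d) → ℝ)
    (hφ_meas : Measurable φ) (hψ_meas : Measurable ψ)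
    (hcond : ∀ y, IsProbabilityMeasure (condSnd ρ ε c φ ψ y))
    (hψ_diff : Differentiable ℝ ψ)
    (hψ_grad : ∀ y, gradient ψ y = -∫ x, gradient (c x) y ∂(condSnd ρ ε c φ ψ y))
    (Λ : ℝ) (hΛ : 0 < Λ)
    (hsc : ∀ x ∈ msupport ρ, Semiconcave Λ (fun y => c x y + ψ y)) :
    ∀ y z : EuclideanSpace ℝ (Fin d),
      KL (condSnd ρ ε c φ ψ y) (condSnd ρ ε c φ ψ z)
        ≤ ENNReal.ofReal (Λ / (2 * ε) * ‖y - z‖ ^ 2) := by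
  intro y z
  have hε' : ε ≠ 0 := ne_of_gt hε
  have hcw : ∀ w : EuclideanSpace ℝ (Fin d), Measurable fun x => c x w := fun w =>
    hc_meas.comp (measurable_id.prodMk measurable_const)
  have hDmeas : ∀ w : EuclideanSpace ℝ (Fin d), Measurable fun x =>
      ENNReal.ofReal (Real.exp (-(c x w + φ x + ψ w) / ε)) := fun w =>
    ENNReal.measurable_ofReal.comp (Real.measurable_exp.comp
      ((((hcw w).add hφ_meas).add_const (ψ w)).neg.div_const ε))
  haveI hPy : IsProbabilityMeasure (condSnd ρ ε c φ ψ y) := hcond y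
  haveI hPz : IsProbabilityMeasure (condSnd ρ ε c φ ψ z) := hcond z
  set h : X → ℝ≥0∞ := fun x => ENNReal.ofReal (Real.exp ((c x z + ψ z - c x y - ψ y) / ε))
    with hh
  have hhmeas : Measurable h :=
    ENNReal.measurable_ofReal.comp (Real.measurable_exp.comp
      (((((hcw z).add_const (ψ z)).sub (hcw y)).sub_const (ψ y)).div_const ε))
  have heq : condSnd ρ ε c φ ψ y = (condSnd ρ ε c φ ψ z).withDensity h := by
    simp only [condSnd]
    rw [← withDensity_mul ρ (hDmeas z) hhmeas]
    congr 1
    funext x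
    simp only [Pi.mul_apply, hh]
    rw [← ENNReal.ofReal_mul (Real.exp_nonneg _), ← Real.exp_add, ← add_div]
    congr 1
    rw [Real.exp_eq_exp]
    ring
  have hac : condSnd ρ ε c φ ψ y ≪ condSnd ρ ε c φ ψ z := by
    rw [heq]; exact withDensity_absolutelyContinuous _ _
  have hacρ : condSnd ρ ε c φ ψ y ≪ ρ := by
    simp only [condSnd]; exact withDensity_absolutelyContinuous _ _
  have hrn : (condSnd ρ ε c φ ψ y).rnDeriv (condSnd ρ ε c φ ψ z)
      =ᵐ[condSnd ρ ε c φ ψ y] h := by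
    have h1 := Measure.rnDeriv_withDensity (condSnd ρ ε c φ ψ z) hhmeas
    rw [← heq] at h1
    exact h1.filter_mono hac.ae_le
  have hlog : (fun x =>
        Real.log ((condSnd ρ ε c φ ψ y).rnDeriv (condSnd ρ ε c φ ψ z) x).toReal)
      =ᵐ[condSnd ρ ε c φ ψ y] fun x => (c x z + ψ z - c x y - ψ y) / ε := by
    filter_upwards [hrn] with x hx
    rw [hx, hh]
    simp only [ENNReal.toReal_ofReal (Real.exp_nonneg _), Real.log_exp]
  unfold KL
  rw [if_pos hac, integral_congr_ae hlog]
  -- a.e. membership in the support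
  have hsupp : ∀ᵐ x ∂(condSnd ρ ε c φ ψ y), x ∈ msupport ρ :=
    (aux_ae_mem_msupport ρ).filter_mono hacρ.ae_le
  have hcdiff : ∀ x, DifferentiableAt ℝ (c x) y := fun x =>
    (hc_smooth x).differentiable one_ne_zero y
  -- integrability of exponentials of directional derivatives
  have hexp_int : ∀ w : EuclideanSpace ℝ (Fin d),
      Integrable (fun x => Real.exp (fderiv ℝ (c x) y w)) (condSnd ρ ε c φ ψ y) := by
    intro w
    set z' := y - ε • w with hz'
    have hz'y : z' - y = -(ε • w) := by rw [hz']; abel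
    have hint0 : Integrable (fun x => Real.exp (-(c x z' + ψ z' - c x y - ψ y) / ε))
        (condSnd ρ ε c φ ψ y) := by
      have hm : Measurable fun x => Real.exp (-(c x z' + ψ z' - c x y - ψ y) / ε) :=
        Real.measurable_exp.comp
          (((((hcw z').add_const (ψ z')).sub (hcw y)).sub_const (ψ y)).neg.div_const ε)
      refine ⟨hm.aestronglyMeasurable, ?_⟩
      rw [hasFiniteIntegral_iff_ofReal (Filter.Eventually.of_forall fun x => Real.exp_nonneg _)]
      have hm2 : Measurable fun x => ENNReal.ofReal (Real.exp (-(c x z' + ψ z' - c x y - ψ y) / ε)) :=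
        ENNReal.measurable_ofReal.comp hm
      have hcalc : ∫⁻ x, ENNReal.ofReal (Real.exp (-(c x z' + ψ z' - c x y - ψ y) / ε))
          ∂(condSnd ρ ε c φ ψ y)
          = ∫⁻ x, ENNReal.ofReal (Real.exp (-(c x z' + φ x + ψ z') / ε)) ∂ρ := by
        simp only [condSnd]
        rw [lintegral_withDensity_eq_lintegral_mul ρ (hDmeas y) hm2]
        refine lintegral_congr fun x => ?_
        simp only [Pi.mul_apply]
        rw [← ENNReal.ofReal_mul (Real.exp_nonneg _), ← Real.exp_add, ← add_div]
        congr 1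
        rw [Real.exp_eq_exp]
        ring
      have huniv : ∫⁻ x, ENNReal.ofReal (Real.exp (-(c x z' + φ x + ψ z') / ε)) ∂ρ
          = (condSnd ρ ε c φ ψ z') Set.univ := by
        simp only [condSnd]
        rw [withDensity_apply _ MeasurableSet.univ, Measure.restrict_univ]
      rw [hcalc, huniv, (hcond z').measure_univ]
      exact ENNReal.one_lt_top
    refine (hint0.const_mul
        (Real.exp ((⟪gradient ψ y, z' - y⟫ + Λ / 2 * ‖z' - y‖ ^ 2) / ε))).mono'
      ((Real.measurable_exp.comp
        (aux_dirderiv_measurable hc_meas hc_smooth y w)).aestronglyMeasurable) ?_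
    filter_upwards [hsupp] with x hx
    have hsem := hsc x hx y z'
    dsimp only at hsem
    rw [aux_gradient_add (hcdiff x) (hψ_diff y), inner_add_left, aux_inner_gradient] at hsem
    have hlin : fderiv ℝ (c x) y (z' - y) = -(ε * fderiv ℝ (c x) y w) := by
      rw [hz'y, map_neg, ContinuousLinearMap.map_smul]; simp
    rw [hlin] at hsem
    have hDw : fderiv ℝ (c x) y w ≤
        ((⟪gradient ψ y, z' - y⟫ + Λ / 2 * ‖z' - y‖ ^ 2) + -(c x z' + ψ z' - c x y - ψ y)) / ε := by
      rw [le_div_iff₀ hε]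
      nlinarith [hsem]
    calc ‖Real.exp (fderiv ℝ (c x) y w)‖ = Real.exp (fderiv ℝ (c x) y w) := by
          rw [Real.norm_eq_abs, Real.abs_exp]
      _ ≤ Real.exp (((⟪gradient ψ y, z' - y⟫ + Λ / 2 * ‖z' - y‖ ^ 2)
            + -(c x z' + ψ z' - c x y - ψ y)) / ε) := Real.exp_le_exp.mpr hDw
      _ = Real.exp ((⟪gradient ψ y, z' - y⟫ + Λ / 2 * ‖z' - y‖ ^ 2) / ε) *
            Real.exp (-(c x z' + ψ z' - c x y - ψ y) / ε) := by
          rw [add_div, Real.exp_add]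
  -- integrability of the gradient of the cost
  have hgradmeas : Measurable fun x => gradient (c x) y :=
    aux_grad_measurable hc_meas hc_smooth y
  have hgradint : Integrable (fun x => gradient (c x) y) (condSnd ρ ε c φ ψ y) := by
    refine Integrable.mono'
      (g := fun x => ∑ i, (Real.exp (fderiv ℝ (c x) y (EuclideanSpace.basisFun (Fin d) ℝ i)) +
        Real.exp (fderiv ℝ (c x) y (-(EuclideanSpace.basisFun (Fin d) ℝ i :
          EuclideanSpace ℝ (Fin d))))))
      (integrable_finset_sum _ fun i _ => (hexp_int _).add (hexp_int _))
      hgradmeas.aestronglyMeasurable ?_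
    refine Filter.Eventually.of_forall fun x => ?_
    have hrepr : gradient (c x) y =
        ∑ i, fderiv ℝ (c x) y (EuclideanSpace.basisFun (Fin d) ℝ i) •
          (EuclideanSpace.basisFun (Fin d) ℝ i : EuclideanSpace ℝ (Fin d)) := by
      conv_lhs => rw [← (EuclideanSpace.basisFun (Fin d) ℝ).sum_repr' (gradient (c x) y)]
      exact Finset.sum_congr rfl fun i _ => by rw [real_inner_comm, aux_inner_gradient]
    rw [hrepr]
    refine (norm_sum_le _ _).trans (Finset.sum_le_sum fun i _ => ?_)
    rw [norm_smul, (EuclideanSpace.basisFun (Fin d) ℝ).orthonormal.1 i, mul_one,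
      Real.norm_eq_abs, map_neg]
    exact aux_abs_le_exp _
  -- conclusion
  by_cases hgint : Integrable (fun x => (c x z + ψ z - c x y - ψ y) / ε) (condSnd ρ ε c φ ψ y)
  · apply ENNReal.ofReal_le_ofReal
    have hflip : (fun x => ⟪gradient (c x) y, z - y⟫) =
        fun x => ⟪z - y, gradient (c x) y⟫ := funext fun x => real_inner_comm _ _
    have hinner_int : Integrable (fun x => ⟪gradient (c x) y, z - y⟫) (condSnd ρ ε c φ ψ y) := by
      rw [hflip]
      exact (innerSL ℝ (z - y)).integrable_comp hgradint
    have hGint : Integrable (fun x =>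
        (⟪gradient (c x) y, z - y⟫ + (⟪gradient ψ y, z - y⟫ + Λ / 2 * ‖z - y‖ ^ 2)) / ε)
        (condSnd ρ ε c φ ψ y) := (hinner_int.add (integrable_const _)).div_const _
    have hle : ∀ᵐ x ∂(condSnd ρ ε c φ ψ y), (c x z + ψ z - c x y - ψ y) / ε ≤
        (⟪gradient (c x) y, z - y⟫ + (⟪gradient ψ y, z - y⟫ + Λ / 2 * ‖z - y‖ ^ 2)) / ε := by
      filter_upwards [hsupp] with x hx
      have hsem := hsc x hx y z
      dsimp only at hsem
      rw [aux_gradient_add (hcdiff x) (hψ_diff y), inner_add_left] at hsem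
      rw [div_le_div_iff₀ hε hε]
      nlinarith [hsem]
    refine (integral_mono_ae hgint hGint hle).trans ?_
    have hgradavg : ∫ x, gradient (c x) y ∂(condSnd ρ ε c φ ψ y) = -gradient ψ y := by
      rw [hψ_grad y, neg_neg]
    have hswap : ∫ x, ⟪gradient (c x) y, z - y⟫ ∂(condSnd ρ ε c φ ψ y) =
        ⟪z - y, -gradient ψ y⟫ := by
      rw [hflip, integral_inner hgradint (z - y), hgradavg]
    have hint_eq : ∫ x,
        (⟪gradient (c x) y, z - y⟫ + (⟪gradient ψ y, z - y⟫ + Λ / 2 * ‖z - y‖ ^ 2)) / ε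
        ∂(condSnd ρ ε c φ ψ y)
        = ((∫ x, ⟪gradient (c x) y, z - y⟫ ∂(condSnd ρ ε c φ ψ y))
            + (⟪gradient ψ y, z - y⟫ + Λ / 2 * ‖z - y‖ ^ 2)) / ε := by
      rw [integral_div, integral_add hinner_int (integrable_const _), integral_const]
      simp [measure_univ]
    rw [hint_eq, hswap, inner_neg_right, real_inner_comm (z - y) (gradient ψ y),
      norm_sub_rev z y]
    exact le_of_eq (by ring)
  · rw [integral_undef hgint, ENNReal.ofReal_zero]
    exact zero_le
end
end

section
/- Let Σ be a symmetric positive definite real d×d matrix, let α, β, ε > 0, and let A₀ be a symmetric positive semidefinite d×d matrix commuting with Σ. Define recursively Bₙ := Σ·(AₙΣ + εα·Id)^{−1} and Aₙ₊₁ := Σ·(BₙΣ + εβ·Id)^{−1}. Then all Aₙ and Bₙ are well-defined symmetric positive semidefinite matrices commuting with Σ (and Bₙ, Aₙ₊₁ are positive definite for all n ≥ 0), and the sequences converge: Aₙ → A_∞ := −(εα/2)·Σ^{−1} + ((ε²α²/4)·Σ^{−2} + (α/β)·Id)^{1/2} and Bₙ → B_∞ := −(εβ/2)·Σ^{−1}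 + ((ε²β²/4)·Σ^{−2} + (β/α)·Id)^{1/2}, where M^{1/2} denotes the positive semidefinite square root of a positive semidefinite matrix M. -/
open Filter Matrix Module.End

noncomputable section

def sinkB (s α ε x : ℝ) : ℝ := s / (x * s + ε * α)

def sinkA (s α β ε a0 : ℝ) : ℕ → ℝ
  | 0 => a0
  | n+1 => sinkB s β ε (sinkB s α ε (sinkA s α β ε a0 n))

def aInf (s α β ε : ℝ) : ℝ :=
  -(ε * α / 2) * s⁻¹ + Real.sqrt (ε ^ 2 * α ^ 2 / 4 * (s⁻¹ * s⁻¹) + α / β)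

variable {s α β ε : ℝ}

lemma sinkB_pos (hs : 0 < s) (hα : 0 < α) (hε : 0 < ε) {x : ℝ} (hx : 0 ≤ x) :
    0 < sinkB s α ε x := by
  have : 0 < x * s + ε * α := by positivity
  exact div_pos hs this

lemma sinkA_nonneg (hs : 0 < s) (hα : 0 < α) (hβ : 0 < β) (hε : 0 < ε) {a0 : ℝ} (ha0 : 0 ≤ a0) :
    ∀ n, 0 ≤ sinkA s α β ε a0 n
  | 0 => ha0
  | n+1 => le_of_lt <| sinkB_pos hs hβ hε
      (le_of_lt <| sinkB_pos hs hα hε (sinkA_nonneg hs hα hβ hε ha0 n))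

lemma aInf_pos (hs : 0 < s) (hα : 0 < α) (hβ : 0 < β) (hε : 0 < ε) :
    0 < aInf s α β ε := by
  have hu : (0:ℝ) ≤ ε * α / 2 * s⁻¹ := by positivity
  have h1 : ε ^ 2 * α ^ 2 / 4 * (s⁻¹ * s⁻¹) = (ε * α / 2 * s⁻¹) ^ 2 := by ring
  have h2 : (ε * α / 2 * s⁻¹) ^ 2 < ε ^ 2 * α ^ 2 / 4 * (s⁻¹ * s⁻¹) + α / β := by
    rw [h1]; have : 0 < α / β := by positivity
    linarith
  have := Real.sqrt_lt_sqrt (by positivity) h2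
  rw [Real.sqrt_sq hu] at this
  unfold aInf; linarith

lemma sinkB_aInf (hs : 0 < s) (hα : 0 < α) (hβ : 0 < β) (hε : 0 < ε) :
    sinkB s α ε (aInf s α β ε) = aInf s β α ε := by
  set u : ℝ := ε * α / 2 * s⁻¹ with hu_def
  have hu : 0 < u := by positivity
  set q : ℝ := Real.sqrt (u ^ 2 + α / β) with hq_def
  have hq2 : q ^ 2 = u ^ 2 + α / β := Real.sq_sqrt (by positivity)
  have hq : 0 < q := Real.sqrt_pos.mpr (by positivity)
  have haInf : aInf s α β ε = q - u := by
    unfold aInf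
    have : ε ^ 2 * α ^ 2 / 4 * (s⁻¹ * s⁻¹) = u ^ 2 := by rw [hu_def]; ring
    rw [this, ← hq_def]; ring
  -- u' and q' for the swapped version
  set u' : ℝ := ε * β / 2 * s⁻¹ with hu'_def
  have hu'u : u' = (β / α) * u := by rw [hu'_def, hu_def]; field_simp
  have hq' : (β / α) * q = Real.sqrt (ε ^ 2 * β ^ 2 / 4 * (s⁻¹ * s⁻¹) + β / α) := by
    rw [hq_def, ← Real.sqrt_sq (le_of_lt (show (0:ℝ) < β / α by positivity)),
      ← Real.sqrt_mul (sq_nonneg _)]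
    congr 1
    rw [hu_def, Real.sqrt_sq (le_of_lt (show (0:ℝ) < β / α by positivity))]
    field_simp
    ring
  have h3 : ε * β / 2 * s⁻¹ = β / α * u := by rw [hu_def]; field_simp
  have haInf' : aInf s β α ε = (β / α) * q - (β / α) * u := by
    unfold aInf
    rw [← hq']
    linear_combination -h3
  rw [sinkB, haInf, haInf']
  have hden : (q - u) * s + ε * α = s * (q + u) := by
    rw [hu_def]; field_simp; ring
  rw [hden]
  have hqu : 0 < q + u := by linarith
  have hkey : (q - u) * (q + u) = α / β := by nlinarith [hq2]
  have h5 : (β / α * q - β / α * u) * (s * (q + u)) = s := by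
    have : (β / α * q - β / α * u) * (s * (q + u)) = s * (β / α) * ((q - u) * (q + u)) := by ring
    rw [this, hkey]
    field_simp
  rw [div_eq_iff (ne_of_gt (show (0:ℝ) < s * (q + u) by positivity))]
  exact h5.symm

-- closed form of the composite map
lemma gstep_eq (hs : 0 < s) (hα : 0 < α) (hβ : 0 < β) (hε : 0 < ε) {x : ℝ} (hx : 0 ≤ x) :
    sinkB s β ε (sinkB s α ε x)
      = (s ^ 2 * x + ε * α * s) / (ε * β * s * x + (s ^ 2 + ε ^ 2 * α * β)) := by
  have h1 : 0 < x * s + ε * α := by positivity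
  have h2 : 0 < s / (x * s + ε * α) * s + ε * β := by positivity
  have h3 : 0 < ε * β * s * x + (s ^ 2 + ε ^ 2 * α * β) := by positivity
  rw [sinkB, sinkB, div_eq_div_iff h2.ne' h3.ne']
  field_simp
  ring

lemma gstep_sub (hs : 0 < s) (hα : 0 < α) (hβ : 0 < β) (hε : 0 < ε)
    {x y : ℝ} (hx : 0 ≤ x) (hy : 0 ≤ y) :
    |sinkB s β ε (sinkB s α ε x) - sinkB s β ε (sinkB s α ε y)|
      ≤ (s ^ 2 / (s ^ 2 + ε ^ 2 * α * β)) ^ 2 * |x - y| := by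
  set c : ℝ := s ^ 2 + ε ^ 2 * α * β with hc_def
  have hc : 0 < c := by positivity
  have hDx : 0 < ε * β * s * x + c := by positivity
  have hDy : 0 < ε * β * s * y + c := by positivity
  rw [gstep_eq hs hα hβ hε hx, gstep_eq hs hα hβ hε hy]
  have hdiff : (s ^ 2 * x + ε * α * s) / (ε * β * s * x + c)
      - (s ^ 2 * y + ε * α * s) / (ε * β * s * y + c)
      = s ^ 4 * (x - y) / ((ε * β * s * x + c) * (ε * β * s * y + c)) := by
    field_simp
    rw [hc_def]; ring
  rw [hdiff, abs_div, abs_mul]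
  rw [abs_of_pos (mul_pos hDx hDy), abs_of_nonneg (show (0:ℝ) ≤ s ^ 4 by positivity)]
  rw [div_le_iff₀ (mul_pos hDx hDy)]
  have hkey : (s ^ 2 / c) ^ 2 * ((ε * β * s * x + c) * (ε * β * s * y + c)) ≥ s ^ 4 := by
    have h1 : c ≤ ε * β * s * x + c := le_add_of_nonneg_left (by positivity)
    have h2 : c ≤ ε * β * s * y + c := le_add_of_nonneg_left (by positivity)
    have hcc : c * c ≤ (ε * β * s * x + c) * (ε * β * s * y + c) := by nlinarith
    have hq : (s ^ 2 / c) ^ 2 = s ^ 4 / c ^ 2 := by field_simp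
    calc s ^ 4 = s ^ 4 / c ^ 2 * (c * c) := by field_simp
      _ ≤ s ^ 4 / c ^ 2 * ((ε * β * s * x + c) * (ε * β * s * y + c)) := by
          apply mul_le_mul_of_nonneg_left hcc (by positivity)
      _ = (s ^ 2 / c) ^ 2 * ((ε * β * s * x + c) * (ε * β * s * y + c)) := by rw [hq]
  calc s ^ 4 * |x - y| ≤ (s ^ 2 / c) ^ 2 * ((ε * β * s * x + c) * (ε * β * s * y + c)) * |x - y| := by
        apply mul_le_mul_of_nonneg_right hkey (abs_nonneg _)
    _ = (s ^ 2 / c) ^ 2 * |x - y| * ((ε * β * s * x + c) * (ε * β * s * y + c)) := by ring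

theorem sinkA_tendsto (hs : 0 < s) (hα : 0 < α) (hβ : 0 < β) (hε : 0 < ε)
    {a0 : ℝ} (ha0 : 0 ≤ a0) :
    Tendsto (sinkA s α β ε a0) atTop (nhds (aInf s α β ε)) := by
  set k : ℝ := (s ^ 2 / (s ^ 2 + ε ^ 2 * α * β)) ^ 2 with hk_def
  have hk0 : 0 ≤ k := by positivity
  have hk1 : k < 1 := by
    have h1 : s ^ 2 / (s ^ 2 + ε ^ 2 * α * β) < 1 := by
      rw [div_lt_one (by positivity)]
      have : 0 < ε ^ 2 * α * β := by positivity
      linarith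
    have h0 : 0 ≤ s ^ 2 / (s ^ 2 + ε ^ 2 * α * β) := by positivity
    nlinarith
  have hfix : sinkB s β ε (sinkB s α ε (aInf s α β ε)) = aInf s α β ε := by
    rw [sinkB_aInf hs hα hβ hε, sinkB_aInf hs hβ hα hε]
  have haInf_pos := aInf_pos hs hα hβ hε
  have hbound : ∀ n, |sinkA s α β ε a0 n - aInf s α β ε| ≤ k ^ n * |a0 - aInf s α β ε| := by
    intro n
    induction n with
    | zero => simp [sinkA]
    | succ n ih =>
      have := gstep_sub hs hα hβ hε (sinkA_nonneg hs hα hβ hε ha0 n) haInf_pos.le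
      rw [hfix] at this
      calc |sinkA s α β ε a0 (n+1) - aInf s α β ε|
          ≤ k * |sinkA s α β ε a0 n - aInf s α β ε| := this
        _ ≤ k * (k ^ n * |a0 - aInf s α β ε|) :=
            mul_le_mul_of_nonneg_left ih hk0
        _ = k ^ (n+1) * |a0 - aInf s α β ε| := by ring
  rw [tendsto_iff_dist_tendsto_zero]
  have h0 : Tendsto (fun n : ℕ => k ^ n * |a0 - aInf s α β ε|) atTop (nhds 0) := by
    simpa using (tendsto_pow_atTop_nhds_zero_of_lt_one hk0 hk1).mul_const
      (|a0 - aInf s α β ε|)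
  exact squeeze_zero (fun n => dist_nonneg)
    (fun n => le_of_eq_of_le (Real.dist_eq _ _) (hbound n)) h0

lemma simultaneous_diag {d : ℕ} (Sg A0 : Matrix (Fin d) (Fin d) ℝ)
    (hSg : Sg.IsHermitian) (hA0 : A0.IsHermitian) (hcomm : A0 * Sg = Sg * A0) :
    ∃ (U : Matrix (Fin d) (Fin d) ℝ) (s a : Fin d → ℝ),
      Uᵀ * U = 1 ∧ Sg * U = U * Matrix.diagonal s ∧ A0 * U = U * Matrix.diagonal a := by
  classical
  set TA : EuclideanSpace ℝ (Fin d) →ₗ[ℝ] EuclideanSpace ℝ (Fin d) :=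
    Matrix.toEuclideanLin A0 with hTA_def
  set TS : EuclideanSpace ℝ (Fin d) →ₗ[ℝ] EuclideanSpace ℝ (Fin d) :=
    Matrix.toEuclideanLin Sg with hTS_def
  have hTA : TA.IsSymmetric := Matrix.isHermitian_iff_isSymmetric.mp hA0
  have hTS : TS.IsSymmetric := Matrix.isHermitian_iff_isSymmetric.mp hSg
  have hC : Commute TA TS := by
    show TA * TS = TS * TA
    simp only [Module.End.mul_eq_comp, hTA_def, hTS_def, Matrix.toEuclideanLin_eq_toLin]
    rw [← Matrix.toLin_mul, ← Matrix.toLin_mul, hcomm]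
  set V : ℝ × ℝ → Submodule ℝ (EuclideanSpace ℝ (Fin d)) :=
    fun μ => eigenspace TA μ.2 ⊓ eigenspace TS μ.1 with hV_def
  have hV : DirectSum.IsInternal V :=
    LinearMap.IsSymmetric.directSum_isInternal_of_commute hTA hTS hC
  have hFam := LinearMap.IsSymmetric.orthogonalFamily_eigenspace_inf_eigenspace hTA hTS
  have hV0 : DirectSum.IsInternal (fun μ : {μ : ℝ × ℝ // V μ ≠ ⊥} => V μ.1) :=
    DirectSum.isInternal_ne_bot_iff.mpr hV
  haveI : Fintype {μ : ℝ × ℝ // V μ ≠ ⊥} :=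
    hV.submodule_iSupIndep.fintypeNeBotOfFiniteDimensional
  have hFam0 : OrthogonalFamily ℝ (fun μ : {μ : ℝ × ℝ // V μ ≠ ⊥} => V μ.1)
      (fun μ => (V μ.1).subtypeₗᵢ) :=
    fun i j hij => hFam (fun h => hij (Subtype.ext h))
  have hn : Module.finrank ℝ (EuclideanSpace ℝ (Fin d)) = d := finrank_euclideanSpace_fin
  set u := hV0.subordinateOrthonormalBasis hn hFam0 with hu_def
  set idx : Fin d → ℝ × ℝ := fun j => (hV0.subordinateOrthonormalBasisIndex hn j hFam0).1
    with hidx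
  have hsub : ∀ j, u j ∈ eigenspace TA (idx j).2 ⊓ eigenspace TS (idx j).1 :=
    fun j => hV0.subordinateOrthonormalBasis_subordinate hn j hFam0
  refine ⟨Matrix.of (fun i j => u j i), fun j => (idx j).1, fun j => (idx j).2, ?_, ?_, ?_⟩
  · ext j k
    have hio := orthonormal_iff_ite.mp u.orthonormal j k
    rw [PiLp.inner_apply] at hio
    simp only [RCLike.inner_apply, starRingEnd_apply, star_trivial] at hio
    simpa [Matrix.mul_apply, Matrix.one_apply, mul_comm] using hio
  · ext i j
    have h1 : TS (u j) = (idx j).1 • u j := mem_eigenspace_iff.mp (hsub j).2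
    have h2 : Sg *ᵥ (WithLp.equiv 2 _ (u j)) = (idx j).1 • (WithLp.equiv 2 _ (u j)) := by
      show WithLp.ofLp (TS (u j)) = _; rw [h1]; rfl
    have h3 := congrFun h2 i
    simp only [Matrix.mulVec, dotProduct, Pi.smul_apply, smul_eq_mul,
      WithLp.equiv, Equiv.refl_apply, Equiv.coe_refl, id_eq] at h3
    have lhs : (Sg * (Matrix.of fun i j => u j i)) i j = ∑ x, Sg i x * u j x := by
      simp [Matrix.mul_apply]
    have rhs : ((Matrix.of fun i j => u j i) * Matrix.diagonal (fun j => (idx j).1)) i j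
        = u j i * (idx j).1 := by
      simp [Matrix.mul_diagonal]
    rw [lhs, rhs]
    exact h3.trans (mul_comm _ _)
  · ext i j
    have h1 : TA (u j) = (idx j).2 • u j := mem_eigenspace_iff.mp (hsub j).1
    have h2 : A0 *ᵥ (WithLp.equiv 2 _ (u j)) = (idx j).2 • (WithLp.equiv 2 _ (u j)) := by
      show WithLp.ofLp (TA (u j)) = _; rw [h1]; rfl
    have h3 := congrFun h2 i
    simp only [Matrix.mulVec, dotProduct, Pi.smul_apply, smul_eq_mul,
      WithLp.equiv, Equiv.refl_apply, Equiv.coe_refl, id_eq] at h3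
    have lhs : (A0 * (Matrix.of fun i j => u j i)) i j = ∑ x, A0 i x * u j x := by
      simp [Matrix.mul_apply]
    have rhs : ((Matrix.of fun i j => u j i) * Matrix.diagonal (fun j => (idx j).2)) i j
        = u j i * (idx j).2 := by
      simp [Matrix.mul_diagonal]
    rw [lhs, rhs]
    exact h3.trans (mul_comm _ _)

/-- Lemma 2.2: convergence of the matrix recursion along Sinkhorn's algorithm. -/
theorem matrix_sinkhorn_recursion_converges {d : ℕ}
    (Sg A0 : Matrix (Fin d) (Fin d) ℝ)
    (hSg_symm : Sg.IsSymm) (hSg_pos : Sg.PosDef)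
    (hA0_psd : A0.PosSemidef) (hA0_comm : A0 * Sg = Sg * A0)
    (α β ε : ℝ) (hα : 0 < α) (hβ : 0 < β) (hε : 0 < ε)
    (A B : ℕ → Matrix (Fin d) (Fin d) ℝ)
    (hA_zero : A 0 = A0)
    (hB_def : ∀ n, B n = Sg * (A n * Sg + (ε * α) • (1 : Matrix (Fin d) (Fin d) ℝ))⁻¹)
    (hA_def : ∀ n, A (n + 1) = Sg * (B n * Sg + (ε * β) • (1 : Matrix (Fin d) (Fin d) ℝ))⁻¹) :
    (∀ n, IsUnit (A n * Sg + (ε * α) • (1 : Matrix (Fin d) (Fin d) ℝ))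
      ∧ IsUnit (B n * Sg + (ε * β) • (1 : Matrix (Fin d) (Fin d) ℝ))
      ∧ (A n).PosSemidef ∧ A n * Sg = Sg * A n
      ∧ (B n).PosSemidef ∧ B n * Sg = Sg * B n
      ∧ (B n).PosDef ∧ (A (n + 1)).PosDef) ∧
    ∃ SA SB : Matrix (Fin d) (Fin d) ℝ,
      SA.PosSemidef ∧ SA ^ 2 = (ε ^ 2 * α ^ 2 / 4) • (Sg⁻¹ * Sg⁻¹) + (α / β) • 1 ∧
      SB.PosSemidef ∧ SB ^ 2 = (ε ^ 2 * β ^ 2 / 4) • (Sg⁻¹ * Sg⁻¹) + (β / α) • 1 ∧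
      Tendsto A atTop (nhds (-(ε * α / 2) • Sg⁻¹ + SA)) ∧
      Tendsto B atTop (nhds (-(ε * β / 2) • Sg⁻¹ + SB)) := by
  classical
  obtain ⟨U, s, a, hU, hSgU, hA0U⟩ :=
    simultaneous_diag Sg A0 hSg_pos.isHermitian hA0_psd.isHermitian hA0_comm
  have hUU : U * Uᵀ = 1 := mul_eq_one_comm.mp hU
  set C : (Fin d → ℝ) → Matrix (Fin d) (Fin d) ℝ :=
    fun x => U * Matrix.diagonal x * Uᵀ with hC_def
  have hCext : ∀ {x y : Fin d → ℝ}, (∀ j, x j = y j) → C x = C y := by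
    intro x y h
    have hxy : x = y := funext h
    rw [hxy]
  have hSg_eq : Sg = C s := by
    calc Sg = Sg * (U * Uᵀ) := by rw [hUU, mul_one]
    _ = (Sg * U) * Uᵀ := (mul_assoc _ _ _).symm
    _ = C s := by rw [hSgU, hC_def]
  have hA0_eq : A0 = C a := by
    calc A0 = A0 * (U * Uᵀ) := by rw [hUU, mul_one]
    _ = (A0 * U) * Uᵀ := (mul_assoc _ _ _).symm
    _ = C a := by rw [hA0U, hC_def]
  -- basic algebra of C
  have hCmul : ∀ x y, C x * C y = C (x * y) := by
    intro x y
    simp only [hC_def]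
    calc U * Matrix.diagonal x * Uᵀ * (U * Matrix.diagonal y * Uᵀ)
        = U * Matrix.diagonal x * (Uᵀ * U) * Matrix.diagonal y * Uᵀ := by
          simp only [mul_assoc]
      _ = U * (Matrix.diagonal x * Matrix.diagonal y) * Uᵀ := by
          rw [hU]; simp only [mul_one, mul_assoc]
      _ = U * Matrix.diagonal (x * y) * Uᵀ := by rw [Matrix.diagonal_mul_diagonal]; rfl
  have hCadd : ∀ x y, C x + C y = C (x + y) := by
    intro x y
    simp only [hC_def]
    rw [show Matrix.diagonal (x + y) = Matrix.diagonal x + Matrix.diagonal y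
      from (Matrix.diagonal_add x y).symm, mul_add, add_mul]
  have hCsmul : ∀ (r : ℝ) x, r • C x = C (r • x) := by
    intro r x
    simp only [hC_def]
    rw [Matrix.diagonal_smul, Matrix.mul_smul, Matrix.smul_mul]
  have hCone : C 1 = 1 := by
    simp only [hC_def]
    rw [show (1 : Fin d → ℝ) = fun _ => 1 from rfl, Matrix.diagonal_one, mul_one, hUU]
  have hCinv : ∀ x : Fin d → ℝ, (∀ j, x j ≠ 0) → (C x)⁻¹ = C x⁻¹ := by
    intro x hx
    apply Matrix.inv_eq_right_inv
    rw [hCmul, ← hCone]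
    exact hCext fun j => by
      simp only [Pi.mul_apply, Pi.inv_apply, Pi.one_apply]
      exact mul_inv_cancel₀ (hx j)
  have hCunit : ∀ x : Fin d → ℝ, (∀ j, x j ≠ 0) → IsUnit (C x) := by
    intro x hx
    have h1 : C x * C x⁻¹ = 1 := by
      rw [hCmul, ← hCone]
      exact hCext fun j => by
        simp only [Pi.mul_apply, Pi.inv_apply, Pi.one_apply]
        exact mul_inv_cancel₀ (hx j)
    exact ⟨⟨C x, C x⁻¹, h1, mul_eq_one_comm.mp h1⟩, rfl⟩
  have hUT : Uᴴ = Uᵀ := by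
    ext i j; simp [Matrix.conjTranspose_apply]
  have hCpsd : ∀ x : Fin d → ℝ, (∀ j, 0 ≤ x j) → (C x).PosSemidef := by
    intro x hx
    have hd : (Matrix.diagonal x).PosSemidef := Matrix.PosSemidef.diagonal hx
    have := hd.mul_mul_conjTranspose_same U
    rwa [hUT] at this
  have hCpd : ∀ x : Fin d → ℝ, (∀ j, 0 < x j) → (C x).PosDef := by
    intro x hx
    refine Matrix.PosDef.of_dotProduct_mulVec_pos (hCpsd x fun j => (hx j).le).1 ?_
    intro v hv
    have hw : Uᵀ *ᵥ v ≠ 0 := by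
      intro h0
      apply hv
      have hvv : U *ᵥ (Uᵀ *ᵥ v) = v := by
        rw [Matrix.mulVec_mulVec, hUU, Matrix.one_mulVec]
      rw [h0, Matrix.mulVec_zero] at hvv
      exact hvv.symm
    have hd : (Matrix.diagonal x).PosDef := Matrix.posDef_diagonal_iff.mpr hx
    have hq := hd.dotProduct_mulVec_pos hw
    have key : star v ⬝ᵥ (C x *ᵥ v) = star (Uᵀ *ᵥ v) ⬝ᵥ (Matrix.diagonal x *ᵥ (Uᵀ *ᵥ v)) := by
      have hsv : star v = v := funext fun i => star_trivial _
      have hsw : star (Uᵀ *ᵥ v) = Uᵀ *ᵥ v := funext fun i => star_trivial _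
      rw [hsv, hsw, hC_def]
      rw [← Matrix.mulVec_mulVec, ← Matrix.mulVec_mulVec]
      rw [dotProduct_mulVec v U, ← Matrix.mulVec_transpose]
    rw [key]
    exact hq
  have hC_commSg : ∀ x, C x * Sg = Sg * C x := by
    intro x
    rw [hSg_eq, hCmul, hCmul]
    exact hCext fun j => by
      simp only [Pi.mul_apply]
      exact mul_comm _ _
  -- positivity of eigenvalues
  have hcol : ∀ j, (fun i => U i j) ⬝ᵥ (fun i => U i j) = 1 := by
    intro j
    have := congrFun (congrFun hU j) j
    simpa [Matrix.mul_apply, Matrix.one_apply, dotProduct] using this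
  have hcol_ne : ∀ j, (fun i => U i j) ≠ 0 := by
    intro j h0
    have h1 := hcol j
    rw [h0] at h1
    simp [dotProduct] at h1
  have hSgcol : ∀ j, Sg *ᵥ (fun i => U i j) = s j • (fun i => U i j) := by
    intro j
    funext i
    have := congrFun (congrFun hSgU i) j
    rw [Matrix.mul_apply, Matrix.mul_diagonal] at this
    simpa [Matrix.mulVec, dotProduct, mul_comm] using this
  have hA0col : ∀ j, A0 *ᵥ (fun i => U i j) = a j • (fun i => U i j) := by
    intro j
    funext i
    have := congrFun (congrFun hA0U i) j
    rw [Matrix.mul_apply, Matrix.mul_diagonal] at this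
    simpa [Matrix.mulVec, dotProduct, mul_comm] using this
  have hs_pos : ∀ j, 0 < s j := by
    intro j
    have hq := hSg_pos.dotProduct_mulVec_pos (hcol_ne j)
    have hsv : star (fun i => U i j) = fun i => U i j := funext fun i => star_trivial _
    rw [hsv, hSgcol j, dotProduct_smul] at hq
    simpa [hcol j] using hq
  have ha_nonneg : ∀ j, 0 ≤ a j := by
    intro j
    have hq := hA0_psd.dotProduct_mulVec_nonneg (fun i => U i j)
    have hsv : star (fun i => U i j) = fun i => U i j := funext fun i => star_trivial _
    rw [hsv, hA0col j, dotProduct_smul] at hq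
    simpa [hcol j] using hq
  -- scalar sequences
  set av : ℕ → Fin d → ℝ := fun n j => sinkA (s j) α β ε (a j) n with hav_def
  set bv : ℕ → Fin d → ℝ := fun n j => sinkB (s j) α ε (av n j) with hbv_def
  have hav_nonneg : ∀ n j, 0 ≤ av n j :=
    fun n j => sinkA_nonneg (hs_pos j) hα hβ hε (ha_nonneg j) n
  have hbv_pos : ∀ n j, 0 < bv n j :=
    fun n j => sinkB_pos (hs_pos j) hα hε (hav_nonneg n j)
  have hav_succ_pos : ∀ n j, 0 < av (n+1) j := by
    intro n j
    have : av (n+1) j = sinkB (s j) β ε (bv n j) := rfl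
    rw [this]
    exact sinkB_pos (hs_pos j) hβ hε (hbv_pos n j).le
  -- denominators
  have hdenA : ∀ n j, 0 < av n j * s j + ε * α := by
    intro n j
    have := hav_nonneg n j
    have := hs_pos j
    positivity
  have hdenB : ∀ n j, 0 < bv n j * s j + ε * β := by
    intro n j
    have := (hbv_pos n j).le
    have := hs_pos j
    positivity
  -- key matrix identities
  have hkeyA : ∀ n, A n = C (av n) →
      A n * Sg + (ε * α) • (1 : Matrix (Fin d) (Fin d) ℝ)
        = C (fun j => av n j * s j + ε * α) := by
    intro n hAn
    rw [hAn, hSg_eq, hCmul, ← hCone, hCsmul, hCadd]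
    exact hCext fun j => by simp
  have hkeyB : ∀ n, B n = C (bv n) →
      B n * Sg + (ε * β) • (1 : Matrix (Fin d) (Fin d) ℝ)
        = C (fun j => bv n j * s j + ε * β) := by
    intro n hBn
    rw [hBn, hSg_eq, hCmul, ← hCone, hCsmul, hCadd]
    exact hCext fun j => by simp
  -- the induction
  have hstepB : ∀ n, A n = C (av n) → B n = C (bv n) := by
    intro n hAn
    rw [hB_def n, hkeyA n hAn, hSg_eq,
      hCinv _ (fun j => (hdenA n j).ne'), hCmul]
    exact hCext fun j => by
      simp only [Pi.mul_apply, Pi.inv_apply]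
      rw [hbv_def]
      simp only [sinkB, div_eq_mul_inv]
  have hstepA : ∀ n, B n = C (bv n) → A (n+1) = C (av (n+1)) := by
    intro n hBn
    rw [hA_def n, hkeyB n hBn, hSg_eq,
      hCinv _ (fun j => (hdenB n j).ne'), hCmul]
    exact hCext fun j => by
      simp only [Pi.mul_apply, Pi.inv_apply]
      have hrfl : av (n+1) j = sinkB (s j) β ε (bv n j) := rfl
      rw [hrfl]
      simp only [sinkB, div_eq_mul_inv]
  have hmain : ∀ n, A n = C (av n) ∧ B n = C (bv n) := by
    intro n
    induction n with
    | zero =>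
      have hA0' : A 0 = C (av 0) := by
        rw [hA_zero, hA0_eq]
        congr 1
      exact ⟨hA0', hstepB 0 hA0'⟩
    | succ n ih =>
      have hA' : A (n+1) = C (av (n+1)) := hstepA n ih.2
      exact ⟨hA', hstepB (n+1) hA'⟩
  constructor
  · -- pointwise claims
    intro n
    refine ⟨?_, ?_, ?_, ?_, ?_, ?_, ?_, ?_⟩
    · rw [hkeyA n (hmain n).1]
      exact hCunit _ (fun j => (hdenA n j).ne')
    · rw [hkeyB n (hmain n).2]
      exact hCunit _ (fun j => (hdenB n j).ne')
    · rw [(hmain n).1]; exact hCpsd _ (hav_nonneg n)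
    · rw [(hmain n).1]; exact hC_commSg _
    · rw [(hmain n).2]; exact hCpsd _ (fun j => (hbv_pos n j).le)
    · rw [(hmain n).2]; exact hC_commSg _
    · rw [(hmain n).2]; exact hCpd _ (hbv_pos n)
    · rw [(hmain (n+1)).1]; exact hCpd _ (hav_succ_pos n)
  · -- convergence
    have hSg_inv : Sg⁻¹ = C (fun j => (s j)⁻¹) := by
      rw [hSg_eq, hCinv _ (fun j => (hs_pos j).ne')]
      exact hCext fun j => rfl
    set sqA : Fin d → ℝ :=
      fun j => Real.sqrt (ε ^ 2 * α ^ 2 / 4 * ((s j)⁻¹ * (s j)⁻¹) + α / β) with hsqA_def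
    set sqB : Fin d → ℝ :=
      fun j => Real.sqrt (ε ^ 2 * β ^ 2 / 4 * ((s j)⁻¹ * (s j)⁻¹) + β / α) with hsqB_def
    have hargA : ∀ j, 0 ≤ ε ^ 2 * α ^ 2 / 4 * ((s j)⁻¹ * (s j)⁻¹) + α / β := by
      intro j
      have h1 : 0 ≤ (s j)⁻¹ * (s j)⁻¹ := mul_self_nonneg _
      have h2 : (0:ℝ) < α / β := by positivity
      nlinarith [sq_nonneg (ε * α)]
    have hargB : ∀ j, 0 ≤ ε ^ 2 * β ^ 2 / 4 * ((s j)⁻¹ * (s j)⁻¹) + β / α := by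
      intro j
      have h1 : 0 ≤ (s j)⁻¹ * (s j)⁻¹ := mul_self_nonneg _
      have h2 : (0:ℝ) < β / α := by positivity
      nlinarith [sq_nonneg (ε * β)]
    refine ⟨C sqA, C sqB, hCpsd _ (fun j => Real.sqrt_nonneg _), ?_,
      hCpsd _ (fun j => Real.sqrt_nonneg _), ?_, ?_, ?_⟩
    · rw [sq, hCmul, hSg_inv, hCmul, ← hCone, hCsmul, hCsmul, hCadd]
      exact hCext fun j => by
        simp only [hsqA_def, Pi.mul_apply, Pi.add_apply, Pi.smul_apply, smul_eq_mul,
          Pi.one_apply, mul_one]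
        exact Real.mul_self_sqrt (hargA j)
    · rw [sq, hCmul, hSg_inv, hCmul, ← hCone, hCsmul, hCsmul, hCadd]
      exact hCext fun j => by
        simp only [hsqB_def, Pi.mul_apply, Pi.add_apply, Pi.smul_apply, smul_eq_mul,
          Pi.one_apply, mul_one]
        exact Real.mul_self_sqrt (hargB j)
    · -- Tendsto A
      have hContC : Continuous C :=
        (continuous_const.matrix_mul (continuous_id.matrix_diagonal)).matrix_mul
          continuous_const
      have hlimA : -(ε * α / 2) • Sg⁻¹ + C sqA = C (fun j => aInf (s j) α β ε) := by
        rw [hSg_inv, hCsmul, hCadd]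
        exact hCext fun j => by
          simp only [hsqA_def, Pi.add_apply, Pi.smul_apply, smul_eq_mul, aInf]
      rw [hlimA]
      have havconv : Tendsto av atTop (nhds (fun j => aInf (s j) α β ε)) := by
        rw [tendsto_pi_nhds]
        intro j
        exact sinkA_tendsto (hs_pos j) hα hβ hε (ha_nonneg j)
      have := (hContC.tendsto _).comp havconv
      exact (tendsto_congr fun n => (hmain n).1).mpr this
    · -- Tendsto B
      have hContC : Continuous C :=
        (continuous_const.matrix_mul (continuous_id.matrix_diagonal)).matrix_mul
          continuous_const
      have hlimB : -(ε * β / 2) • Sg⁻¹ + C sqB = C (fun j => aInf (s j) β α ε) := by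
        rw [hSg_inv, hCsmul, hCadd]
        exact hCext fun j => by
          simp only [hsqB_def, Pi.add_apply, Pi.smul_apply, smul_eq_mul, aInf]
      rw [hlimB]
      have hbvconv : Tendsto bv atTop (nhds (fun j => aInf (s j) β α ε)) := by
        rw [tendsto_pi_nhds]
        intro j
        have h1 : Tendsto (fun n => av n j) atTop (nhds (aInf (s j) α β ε)) :=
          sinkA_tendsto (hs_pos j) hα hβ hε (ha_nonneg j)
        have hden : aInf (s j) α β ε * s j + ε * α ≠ 0 := by
          have := aInf_pos (hs_pos j) hα hβ hε
          have := hs_pos j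
          positivity
        have h2 : Tendsto (fun n => bv n j) atTop (nhds (sinkB (s j) α ε (aInf (s j) α β ε))) := by
          simp only [hbv_def, sinkB]
          exact tendsto_const_nhds.div ((h1.mul_const (s j)).add_const (ε * α)) hden
        rwa [sinkB_aInf (hs_pos j) hα hβ hε] at h2
      have := (hContC.tendsto _).comp hbvconv
      exact (tendsto_congr fun n => (hmain n).2).mpr this

end
end
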